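/- Let D be a set and F ⊆ B(D) convex. For any n points x_0,…,x_n ∈ D chosen as in the induction with pairs (f_k, g_k) ∈ F satisfying f_k(x_j)=g_k(x_j) for j<k and |f_k(x_k)−g_k(x_k)| ≥ ρ−δ, the set H = { (1/(n+1)) Σ_{i=0}^n (ξ_i f_i + (1−ξ_i) g_i) : ξ ∈ {0,1}^{n+1} } is contained in F and has exactly 2^{n+1} elements, provided ρ − δ > 0. -/

import Mathlib

open scoped Pointwise

noncomputable section

/-- `B(D)`: the space of bounded complex-valued functions on `D` with sup-norm,
modeled as `ℓ^∞(D, ℂ)`. -/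
abbrev BD (D : Type*) : Type _ := ↥(lp (fun _ : D => ℂ) ⊤)

/-- The `n`-th sampling number of `F` in `B(D)`. -/
def samplingNum {D : Type*} (F : Set (BD D)) (n : ℕ) : ℝ :=
  ⨅ (x : Fin n → D) (φ : (Fin n → ℂ) → BD D),
    ⨆ f ∈ F, ‖f - φ (fun k => (f : ∀ _ : D, ℂ) (x k))‖

/-- The `n`-th entropy number of `F` in a seminormed space `Y` (using `2^n` centers). -/
def entropyNum {Y : Type*} [SeminormedAddCommGroup Y] (F : Set Y) (n : ℕ) : ℝ :=
  ⨅ (y : Fin (2 ^ n) → Y), ⨆ f ∈ F, ⨅ i, ‖f - y i‖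

/-- The `n`-th inner entropy number of `F` (using `2^n + 1` points of `F`). -/
def innerEntropyNum {Y : Type*} [SeminormedAddCommGroup Y] (F : Set Y) (n : ℕ) : ℝ :=
  ⨆ (y : Fin (2 ^ n + 1) → Y) (_ : ∀ i, y i ∈ F),
    ⨅ p : {p : Fin (2 ^ n + 1) × Fin (2 ^ n + 1) // p.1 ≠ p.2}, ‖y p.1.1 - y p.1.2‖ / 2

/-- The (global) diameter of information of `F` in `B(D)`. -/
def diamInfo {D : Type*} (F : Set (BD D)) (n : ℕ) : ℝ :=
  ⨅ (x : Fin n → D), ⨆ f ∈ F, ⨆ g ∈ F,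
    ⨆ (_ : ∀ k, (f : ∀ _ : D, ℂ) (x k) = (g : ∀ _ : D, ℂ) (x k)), ‖f - g‖

theorem convex_comb_set_card {D : Type*} (F : Set (BD D)) (hconv : Convex ℝ F) (n : ℕ)
    (f g : Fin (n + 1) → BD D) (x : Fin (n + 1) → D) (ρ δ : ℝ) (hpos : 0 < ρ - δ)
    (hmem : ∀ k, f k ∈ F ∧ g k ∈ F)
    (hagree : ∀ k j : Fin (n + 1), j < k →
      (f k : ∀ _ : D, ℂ) (x j) = (g k : ∀ _ : D, ℂ) (x j))
    (hsep : ∀ k, ρ - δ ≤ ‖(f k : ∀ _ : D, ℂ) (x k) - (g k : ∀ _ : D, ℂ) (x k)‖) :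
    (Set.range (fun ξ : Fin (n + 1) → Bool =>
        ((n : ℝ) + 1)⁻¹ • ∑ i, if ξ i then f i else g i) ⊆ F) ∧
    (Set.range (fun ξ : Fin (n + 1) → Bool =>
        ((n : ℝ) + 1)⁻¹ • ∑ i, if ξ i then f i else g i)).ncard = 2 ^ (n + 1) := by
  set h : (Fin (n + 1) → Bool) → BD D := fun ξ =>
    ((n : ℝ) + 1)⁻¹ • ∑ i, if ξ i then f i else g i with hh
  have hne : ((n : ℝ) + 1) ≠ 0 := by positivity
  have hinj : Function.Injective h := by
    intro ξ ξ' heq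
    by_contra hξ
    have hS : (Finset.univ.filter (fun i => ξ i ≠ ξ' i)).Nonempty := by
      rw [Finset.filter_nonempty_iff]
      push_neg at hξ
      obtain ⟨i, hi⟩ := Function.ne_iff.mp hξ
      exact ⟨i, Finset.mem_univ i, hi⟩
    set k := (Finset.univ.filter (fun i => ξ i ≠ ξ' i)).min' hS with hk
    have hkmem := (Finset.univ.filter (fun i => ξ i ≠ ξ' i)).min'_mem hS
    rw [Finset.mem_filter] at hkmem
    have hkne : ξ k ≠ ξ' k := hkmem.2
    have hmin : ∀ j, j < k → ξ j = ξ' j := by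
      intro j hj
      by_contra hje
      exact absurd (Finset.min'_le _ j (Finset.mem_filter.mpr ⟨Finset.mem_univ j, hje⟩))
        (not_le.mpr hj)
    have hsum : (∑ i, if ξ i then f i else g i) = ∑ i, if ξ' i then f i else g i := by
      have := smul_right_injective (BD D) (inv_ne_zero hne) heq
      exact this
    have hfun : ∀ d : D, ((∑ i, if ξ i then f i else g i : BD D) : ∀ _ : D, ℂ) d =
        ((∑ i, if ξ' i then f i else g i : BD D) : ∀ _ : D, ℂ) d := by
      intro d; rw [hsum]
    have hxk := hfun (x k)
    rw [lp.coeFn_sum, lp.coeFn_sum] at hxk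
    simp only [Finset.sum_apply] at hxk
    have hterm : ∀ i : Fin (n + 1), i ≠ k →
        ((if ξ i then f i else g i : BD D) : ∀ _ : D, ℂ) (x k) =
        ((if ξ' i then f i else g i : BD D) : ∀ _ : D, ℂ) (x k) := by
      intro i hik
      by_cases hie : ξ i = ξ' i
      · rw [hie]
      · have hki : k < i := by
          rcases lt_trichotomy i k with h1 | h1 | h1
          · exact absurd (hmin i h1) hie
          · exact absurd h1 hik
          · exact h1
        have := hagree i k hki
        by_cases hb : ξ i <;> by_cases hb' : ξ' i <;> simp [hb, hb', this]
    have hkk : ((if ξ k then f k else g k : BD D) : ∀ _ : D, ℂ) (x k) =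
        ((if ξ' k then f k else g k : BD D) : ∀ _ : D, ℂ) (x k) := by
      have h1 : ∑ i : Fin (n+1), ((if ξ i then f i else g i : BD D) : ∀ _ : D, ℂ) (x k)
          - ∑ i : Fin (n+1), ((if ξ' i then f i else g i : BD D) : ∀ _ : D, ℂ) (x k) = 0 := by
        rw [hxk]; ring
      rw [← Finset.sum_sub_distrib] at h1
      have h2 := Finset.sum_eq_single_of_mem
        (f := fun i => ((if ξ i then f i else g i : BD D) : ∀ _ : D, ℂ) (x k)
          - ((if ξ' i then f i else g i : BD D) : ∀ _ : D, ℂ) (x k))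
        k (Finset.mem_univ k)
        (fun i _ hik => sub_eq_zero.mpr (hterm i hik))
      rw [h1] at h2
      linear_combination -h2
    have hzero : (f k : ∀ _ : D, ℂ) (x k) = (g k : ∀ _ : D, ℂ) (x k) := by
      rcases Bool.eq_false_or_eq_true (ξ k) with hb | hb <;>
        rcases Bool.eq_false_or_eq_true (ξ' k) with hb' | hb'
      · simp [hb, hb'] at hkne
      · simp only [hb, hb', if_true, if_false, Bool.false_eq_true] at hkk; exact hkk
      · simp only [hb, hb', if_true, if_false, Bool.false_eq_true] at hkk; exact hkk.symm
      · simp [hb, hb'] at hkne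
    have := hsep k
    rw [hzero, sub_self, norm_zero] at this
    linarith
  constructor
  · rintro _ ⟨ξ, rfl⟩
    have heq2 : h ξ = ∑ i : Fin (n + 1), ((n : ℝ) + 1)⁻¹ • (if ξ i then f i else g i) :=
      Finset.smul_sum
    rw [heq2]
    refine hconv.sum_mem (fun i _ => by positivity) ?_ ?_
    · simp [Finset.sum_const, hne]
    · intro i _
      rcases Bool.eq_false_or_eq_true (ξ i) with hb | hb <;> simp [hb, (hmem i).1, (hmem i).2]
  · rw [← Set.image_univ, Set.ncard_image_of_injective _ hinj, Set.ncard_univ]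
    simp
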